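/- Let Y, Z, N be random variables on a common probability space taking values in a finite abelian group (for Y and N) and a finite set (for Z), where N is independent of the pair (Y, Z). Then the Shannon conditional entropy satisfies H(Z | Y + N) ≥ H(Z | Y). In particular, adding independent noise N to a feature tensor Y can only increase the uncertainty about any other variable Z given the observed noisy feature. -/

import Mathlib

/-- Probability that the random variable `X` (on a finite probability space with
probability mass function `p`) takes the value `a`. -/
noncomputable def pr {Ω α : Type*} [Fintype Ω] [DecidableEq α]
    (p : Ω → ℝ) (X : Ω → α) (a : α) : ℝ :=
  ∑ ω ∈ Finset.univ.filter (fun ω => X ω = a), p ω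

/-- Shannon entropy `H(X)` of a finite-valued random variable `X`. -/
noncomputable def ent {Ω α : Type*} [Fintype Ω] [Fintype α] [DecidableEq α]
    (p : Ω → ℝ) (X : Ω → α) : ℝ :=
  ∑ a, Real.negMulLog (pr p X a)

/-- Shannon conditional entropy `H(X | Y) = H(X, Y) - H(Y)`. -/
noncomputable def condEnt {Ω α β : Type*} [Fintype Ω] [Fintype α] [DecidableEq α]
    [Fintype β] [DecidableEq β] (p : Ω → ℝ) (X : Ω → α) (Y : Ω → β) : ℝ :=
  ent p (fun ω => (X ω, Y ω)) - ent p Y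

/-- Shannon mutual information `I(X ; Y) = H(X) + H(Y) - H(X, Y)`. -/
noncomputable def mutInfo {Ω α β : Type*} [Fintype Ω] [Fintype α] [DecidableEq α]
    [Fintype β] [DecidableEq β] (p : Ω → ℝ) (X : Ω → α) (Y : Ω → β) : ℝ :=
  ent p X + ent p Y - ent p (fun ω => (X ω, Y ω))

/-- Conditional mutual information `I(X ; Y | Z) = H(X | Z) - H(X | Y, Z)`. -/
noncomputable def condMutInfo {Ω α β γ : Type*} [Fintype Ω] [Fintype α] [DecidableEq α]
    [Fintype β] [DecidableEq β] [Fintype γ] [DecidableEq γ]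
    (p : Ω → ℝ) (X : Ω → α) (Y : Ω → β) (Z : Ω → γ) : ℝ :=
  condEnt p X Z - condEnt p X (fun ω => (Y ω, Z ω))


open Finset Real

section aux
variable {Ω : Type*} [Fintype Ω] {α β : Type*} [DecidableEq α] [DecidableEq β]
variable (p : Ω → ℝ)

lemma pr_nonneg (hp : ∀ ω, 0 ≤ p ω) (X : Ω → α) (a : α) : 0 ≤ pr p X a :=
  Finset.sum_nonneg fun ω _ => hp ω

lemma pr_congr {α' : Type*} [DecidableEq α'] (X : Ω → α) (X' : Ω → α') (a : α) (a' : α')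
    (h : ∀ ω, X ω = a ↔ X' ω = a') : pr p X a = pr p X' a' := by
  unfold pr
  congr 1
  apply Finset.filter_congr
  intro ω _
  simpa using h ω

lemma sum_pr [Fintype α] (hp1 : ∑ ω, p ω = 1) (X : Ω → α) : ∑ a, pr p X a = 1 := by
  unfold pr
  rw [Finset.sum_fiberwise_of_maps_to (fun ω _ => Finset.mem_univ (X ω)) p, hp1]

lemma pr_sum_fiber [Fintype β] (X : Ω → α) (Y : Ω → β) (a : α) :
    pr p X a = ∑ b, pr p (fun ω => (X ω, Y ω)) (a, b) := by
  unfold pr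
  rw [← Finset.sum_fiberwise_of_maps_to (g := Y) (t := Finset.univ)
    (fun ω _ => Finset.mem_univ (Y ω)) p]
  refine Finset.sum_congr rfl fun b _ => ?_
  congr 1
  rw [Finset.filter_filter]
  apply Finset.filter_congr
  intro ω _
  simp [Prod.ext_iff, and_comm]

lemma ent_comp_equiv [Fintype α] [Fintype β] (e : α ≃ β) (X : Ω → α) :
    ent p (fun ω => e (X ω)) = ent p X := by
  unfold ent
  rw [← Equiv.sum_comp e]
  refine Finset.sum_congr rfl fun a _ => ?_
  congr 1
  exact pr_congr p _ X (e a) a (fun ω => by simp)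

lemma ent_indep [Fintype α] [Fintype β] (hp : ∀ ω, 0 ≤ p ω) (hp1 : ∑ ω, p ω = 1)
    (X : Ω → α) (Y : Ω → β)
    (h : ∀ a b, pr p (fun ω => (X ω, Y ω)) (a, b) = pr p X a * pr p Y b) :
    ent p (fun ω => (X ω, Y ω)) = ent p X + ent p Y := by
  unfold ent
  rw [Fintype.sum_prod_type]
  have : ∀ a b, Real.negMulLog (pr p (fun ω => (X ω, Y ω)) (a, b)) =
      pr p Y b * Real.negMulLog (pr p X a) + pr p X a * Real.negMulLog (pr p Y b) := by
    intro a b; rw [h a b, Real.negMulLog_mul]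
  simp_rw [this, Finset.sum_add_distrib, ← Finset.sum_mul, ← Finset.mul_sum,
    sum_pr p hp1 Y, ← Finset.sum_mul, sum_pr p hp1 X]
  ring

end aux
section submod
open Finset Real

lemma key_ineq (F a b c : ℝ) (hF : 0 ≤ F) (hFa : F ≤ a) (hFb : F ≤ b) (hFc : F ≤ c) :
    F * Real.log F + F * Real.log c - F * Real.log a - F * Real.log b ≥ F - a * b / c := by
  rcases eq_or_lt_of_le hF with h | hFpos
  · have : 0 ≤ a * b / c :=
      div_nonneg (mul_nonneg (le_trans hF hFa) (le_trans hF hFb)) (le_trans hF hFc)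
    simp [← h]; linarith
  · have ha : 0 < a := lt_of_lt_of_le hFpos hFa
    have hb : 0 < b := lt_of_lt_of_le hFpos hFb
    have hc : 0 < c := lt_of_lt_of_le hFpos hFc
    have ht : 0 < a * b / (F * c) := by positivity
    have hlog := Real.log_le_sub_one_of_pos ht
    have hlexp : Real.log (a * b / (F * c)) =
        Real.log a + Real.log b - Real.log F - Real.log c := by
      rw [Real.log_div (by positivity) (by positivity), Real.log_mul ha.ne' hb.ne',
        Real.log_mul hFpos.ne' hc.ne']
      ring
    have h2 : F * Real.log (a * b / (F * c)) ≤ F * (a * b / (F * c) - 1) :=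
      mul_le_mul_of_nonneg_left hlog hF
    have h3 : F * (a * b / (F * c) - 1) = a * b / c - F := by
      field_simp
    rw [hlexp, h3] at h2
    nlinarith [h2]

lemma submod {α β γ : Type*} [Fintype α] [Fintype β] [Fintype γ]
    (F : α → β → γ → ℝ) (hF : ∀ z w y, 0 ≤ F z w y)
    (hF1 : ∑ z, ∑ w, ∑ y, F z w y = 1) :
    (∑ z, ∑ w, Real.negMulLog (∑ y, F z w y))
      + (∑ w, ∑ y, Real.negMulLog (∑ z, F z w y))
      - (∑ z, ∑ w, ∑ y, Real.negMulLog (F z w y))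
      - (∑ w, Real.negMulLog (∑ z, ∑ y, F z w y)) ≥ 0 := by
  set a : α → β → ℝ := fun z w => ∑ y, F z w y with ha
  set b : β → γ → ℝ := fun w y => ∑ z, F z w y with hb
  set c : β → ℝ := fun w => ∑ z, ∑ y, F z w y with hc
  have hann : ∀ z w, 0 ≤ a z w := fun z w => Finset.sum_nonneg fun y _ => hF z w y
  have hbnn : ∀ w y, 0 ≤ b w y := fun w y => Finset.sum_nonneg fun z _ => hF z w y
  have hcnn : ∀ w, 0 ≤ c w := fun w => Finset.sum_nonneg fun z _ => hann z w
  have hFa : ∀ z w y, F z w y ≤ a z w := fun z w y =>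
    Finset.single_le_sum (fun y' _ => hF z w y') (Finset.mem_univ y)
  have hFb : ∀ z w y, F z w y ≤ b w y := fun z w y =>
    Finset.single_le_sum (fun z' _ => hF z' w y) (Finset.mem_univ z)
  have hac : ∀ z w, a z w ≤ c w := fun z w =>
    Finset.single_le_sum (fun z' _ => hann z' w) (Finset.mem_univ z)
  have hFc : ∀ z w y, F z w y ≤ c w := fun z w y => le_trans (hFa z w y) (hac z w)
  -- rewrite each entropy term as a triple sum
  have e1 : ∑ z, ∑ w, Real.negMulLog (a z w)
      = ∑ z, ∑ w, ∑ y, -(F z w y * Real.log (a z w)) := by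
    refine Finset.sum_congr rfl fun z _ => Finset.sum_congr rfl fun w _ => ?_
    rw [Real.negMulLog, neg_mul]
    conv_lhs => rw [ha]
    rw [Finset.sum_mul, ← Finset.sum_neg_distrib]
  have e2 : ∑ w, ∑ y, Real.negMulLog (b w y)
      = ∑ z, ∑ w, ∑ y, -(F z w y * Real.log (b w y)) := by
    have h1 : ∀ w y, Real.negMulLog (b w y) = ∑ z, -(F z w y * Real.log (b w y)) := by
      intro w y
      rw [Real.negMulLog, neg_mul]
      conv_lhs => rw [hb]
      rw [Finset.sum_mul, ← Finset.sum_neg_distrib]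
    calc ∑ w, ∑ y, Real.negMulLog (b w y)
        = ∑ w, ∑ y, ∑ z, -(F z w y * Real.log (b w y)) :=
          Finset.sum_congr rfl fun w _ => Finset.sum_congr rfl fun y _ => h1 w y
      _ = ∑ w, ∑ z, ∑ y, -(F z w y * Real.log (b w y)) :=
          Finset.sum_congr rfl fun w _ => Finset.sum_comm
      _ = ∑ z, ∑ w, ∑ y, -(F z w y * Real.log (b w y)) := Finset.sum_comm
  have e4 : ∑ w, Real.negMulLog (c w)
      = ∑ z, ∑ w, ∑ y, -(F z w y * Real.log (c w)) := by
    have h1 : ∀ w, Real.negMulLog (c w) = ∑ z, ∑ y, -(F z w y * Real.log (c w)) := by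
      intro w
      rw [Real.negMulLog, neg_mul]
      conv_lhs => rw [hc]
      rw [Finset.sum_mul, ← Finset.sum_neg_distrib]
      exact Finset.sum_congr rfl fun z _ => by
        rw [Finset.sum_mul, ← Finset.sum_neg_distrib]
    calc ∑ w, Real.negMulLog (c w)
        = ∑ w, ∑ z, ∑ y, -(F z w y * Real.log (c w)) :=
          Finset.sum_congr rfl fun w _ => h1 w
      _ = ∑ z, ∑ w, ∑ y, -(F z w y * Real.log (c w)) := Finset.sum_comm
  have e3 : ∑ z, ∑ w, ∑ y, Real.negMulLog (F z w y)
      = ∑ z, ∑ w, ∑ y, -(F z w y * Real.log (F z w y)) := by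
    simp [Real.negMulLog, neg_mul]
  rw [e1, e2, e3, e4]
  have total :
      (∑ z, ∑ w, ∑ y, -(F z w y * Real.log (a z w)))
        + (∑ z, ∑ w, ∑ y, -(F z w y * Real.log (b w y)))
        - (∑ z, ∑ w, ∑ y, -(F z w y * Real.log (F z w y)))
        - (∑ z, ∑ w, ∑ y, -(F z w y * Real.log (c w)))
      = ∑ z, ∑ w, ∑ y,
          (-(F z w y * Real.log (a z w)) + -(F z w y * Real.log (b w y))
            - -(F z w y * Real.log (F z w y)) - -(F z w y * Real.log (c w))) := by
    simp only [← Finset.sum_add_distrib, ← Finset.sum_sub_distrib]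
  rw [total]
  have step : ∀ z w y,
      (-(F z w y * Real.log (a z w)) + -(F z w y * Real.log (b w y))
        - -(F z w y * Real.log (F z w y)) - -(F z w y * Real.log (c w)))
      ≥ F z w y - a z w * b w y / c w := by
    intro z w y
    have := key_ineq (F z w y) (a z w) (b w y) (c w) (hF z w y) (hFa z w y) (hFb z w y)
      (hFc z w y)
    linarith
  have hsum2 : ∑ z, ∑ w, ∑ y, (F z w y - a z w * b w y / c w) ≥ 0 := by
    have hsplit : ∑ z, ∑ w, ∑ y, (F z w y - a z w * b w y / c w)
        = 1 - ∑ z, ∑ w, ∑ y, a z w * b w y / c w := by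
      simp only [Finset.sum_sub_distrib, hF1]
    rw [hsplit]
    have habc : ∑ z, ∑ w, ∑ y, a z w * b w y / c w ≤ 1 := by
      have hw : ∀ w, ∑ z, ∑ y, a z w * b w y / c w ≤ c w := by
        intro w
        have hby : ∑ y, b w y = c w := by rw [hb, hc]; exact Finset.sum_comm
        have hza : ∑ z, a z w = c w := rfl
        have hzsum : ∑ z, ∑ y, a z w * b w y / c w = c w * c w / c w := by
          simp only [div_eq_mul_inv, ← Finset.mul_sum, ← Finset.sum_mul, hby, hza]
        rw [hzsum]
        rcases eq_or_lt_of_le (hcnn w) with h | h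
        · simp [← h]
        · rw [mul_div_assoc, div_self h.ne', mul_one]
      calc ∑ z, ∑ w, ∑ y, a z w * b w y / c w
          = ∑ w, ∑ z, ∑ y, a z w * b w y / c w := Finset.sum_comm
        _ ≤ ∑ w, c w := Finset.sum_le_sum fun w _ => hw w
        _ = 1 := by rw [hc]; rw [Finset.sum_comm]; exact hF1
    linarith
  calc (0:ℝ) ≤ ∑ z, ∑ w, ∑ y, (F z w y - a z w * b w y / c w) := hsum2
    _ ≤ _ :=
        Finset.sum_le_sum fun z _ => Finset.sum_le_sum fun w _ =>
          Finset.sum_le_sum fun y _ => step z w y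

end submod

/-- **Lemma 2.** If `N` is independent of the pair `(Y, Z)`, then
`H(Z | Y + N) ≥ H(Z | Y)`: adding independent noise to a feature can only
increase the uncertainty about any other variable. -/
theorem stmt3 {Ω G 𝒵 : Type*} [Fintype Ω]
    [AddCommGroup G] [Fintype G] [DecidableEq G] [Fintype 𝒵] [DecidableEq 𝒵]
    (p : Ω → ℝ) (hp : ∀ ω, 0 ≤ p ω) (hp1 : ∑ ω, p ω = 1)
    (Y N : Ω → G) (Z : Ω → 𝒵)
    (hindep : ∀ (n : G) (y : G) (z : 𝒵),
      pr p (fun ω => (N ω, (Y ω, Z ω))) (n, (y, z))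
        = pr p N n * pr p (fun ω => (Y ω, Z ω)) (y, z)) :
    condEnt p Z (fun ω => Y ω + N ω) ≥ condEnt p Z Y := by
  set W : Ω → G := fun ω => Y ω + N ω with hW
  set F : 𝒵 → G → G → ℝ :=
    fun z w y => pr p (fun ω => (Z ω, (W ω, Y ω))) (z, (w, y)) with hF
  have hFnn : ∀ z w y, 0 ≤ F z w y := fun z w y => pr_nonneg p hp _ _
  have hF1 : ∑ z, ∑ w, ∑ y, F z w y = 1 := by
    have h := sum_pr p hp1 (fun ω => (Z ω, (W ω, Y ω)))
    simp only [Fintype.sum_prod_type] at h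
    exact h
  -- identify the four entropies with sums of F
  have hZW : ent p (fun ω => (Z ω, W ω)) = ∑ z, ∑ w, Real.negMulLog (∑ y, F z w y) := by
    unfold ent
    rw [Fintype.sum_prod_type]
    refine Finset.sum_congr rfl fun z _ => Finset.sum_congr rfl fun w _ => ?_
    congr 1
    rw [pr_sum_fiber p (fun ω => (Z ω, W ω)) Y (z, w)]
    exact Finset.sum_congr rfl fun y _ =>
      pr_congr p _ _ _ _ (fun ω => by simp [Prod.ext_iff, and_assoc])
  have hWY : ent p (fun ω => (W ω, Y ω)) = ∑ w, ∑ y, Real.negMulLog (∑ z, F z w y) := by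
    unfold ent
    rw [Fintype.sum_prod_type]
    refine Finset.sum_congr rfl fun w _ => Finset.sum_congr rfl fun y _ => ?_
    congr 1
    rw [pr_sum_fiber p (fun ω => (W ω, Y ω)) Z (w, y)]
    exact Finset.sum_congr rfl fun z _ =>
      pr_congr p _ _ _ _ (fun ω => by simp [Prod.ext_iff]; tauto)
  have hZWY : ent p (fun ω => (Z ω, (W ω, Y ω)))
      = ∑ z, ∑ w, ∑ y, Real.negMulLog (F z w y) := by
    unfold ent
    simp only [Fintype.sum_prod_type]
    rfl
  have hWent : ent p W = ∑ w, Real.negMulLog (∑ z, ∑ y, F z w y) := by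
    unfold ent
    refine Finset.sum_congr rfl fun w _ => ?_
    congr 1
    rw [pr_sum_fiber p W (fun ω => (Z ω, Y ω)) w, Fintype.sum_prod_type]
    refine Finset.sum_congr rfl fun z _ => Finset.sum_congr rfl fun y _ =>
      pr_congr p _ _ _ _ (fun ω => by simp [Prod.ext_iff]; tauto)
  have hsub := submod F hFnn hF1
  rw [← hZW, ← hWY, ← hZWY, ← hWent] at hsub
  -- entropy identities via relabeling and independence
  let e1 : 𝒵 × (G × G) ≃ G × (G × 𝒵) :=
    { toFun := fun x => (x.2.1 - x.2.2, (x.2.2, x.1))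
      invFun := fun x => (x.2.2, (x.2.1 + x.1, x.2.1))
      left_inv := by rintro ⟨z, w, y⟩; simp
      right_inv := by rintro ⟨n, y, z⟩; simp }
  have hE1 : ent p (fun ω => (Z ω, (W ω, Y ω))) = ent p (fun ω => (N ω, (Y ω, Z ω))) := by
    rw [← ent_comp_equiv p e1 (fun ω => (Z ω, (W ω, Y ω)))]
    congr 1
    funext ω
    simp only [e1, Equiv.coe_fn_mk]
    simp [hW, add_sub_cancel_left]
  let e2 : G × G ≃ G × G :=
    { toFun := fun x => (x.1 - x.2, x.2)
      invFun := fun x => (x.2 + x.1, x.2)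
      left_inv := by rintro ⟨w, y⟩; simp
      right_inv := by rintro ⟨n, y⟩; simp }
  have hE2 : ent p (fun ω => (W ω, Y ω)) = ent p (fun ω => (N ω, Y ω)) := by
    rw [← ent_comp_equiv p e2 (fun ω => (W ω, Y ω))]
    congr 1
    funext ω
    simp only [e2, Equiv.coe_fn_mk]
    simp [hW, add_sub_cancel_left]
  have hNYZ : ent p (fun ω => (N ω, (Y ω, Z ω)))
      = ent p N + ent p (fun ω => (Y ω, Z ω)) :=
    ent_indep p hp hp1 N (fun ω => (Y ω, Z ω)) (fun n yz => by
      obtain ⟨y, z⟩ := yz; exact hindep n y z)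
  have hNYind : ∀ n y, pr p (fun ω => (N ω, Y ω)) (n, y) = pr p N n * pr p Y y := by
    intro n y
    rw [pr_sum_fiber p (fun ω => (N ω, Y ω)) Z (n, y)]
    have : ∀ z, pr p (fun ω => ((N ω, Y ω), Z ω)) ((n, y), z)
        = pr p N n * pr p (fun ω => (Y ω, Z ω)) (y, z) := by
      intro z
      rw [← hindep n y z]
      exact pr_congr p _ _ _ _ (fun ω => by simp [Prod.ext_iff]; tauto)
    rw [Finset.sum_congr rfl fun z _ => this z, ← Finset.mul_sum,
      ← pr_sum_fiber p Y Z y]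
  have hNY : ent p (fun ω => (N ω, Y ω)) = ent p N + ent p Y :=
    ent_indep p hp hp1 N Y hNYind
  let e3 : 𝒵 × G ≃ G × 𝒵 := Equiv.prodComm _ _
  have hE3 : ent p (fun ω => (Z ω, Y ω)) = ent p (fun ω => (Y ω, Z ω)) := by
    rw [← ent_comp_equiv p e3 (fun ω => (Z ω, Y ω))]
    rfl
  unfold condEnt
  rw [hE1, hNYZ, hE2, hNY] at hsub
  rw [hE3]
  linarith
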